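/- Let A be a commutative ring and I ⊆ A an ideal generated by a regular sequence (s₁, …, s_k) in A. Let B be a commutative A-algebra such that the images of s₁, …, s_k form a regular sequence in B. Then Tor_i^A(A/I, B) = 0 for all i ≥ 1. -/

import Mathlib

/-!
Let `A` be a commutative ring and `I ⊆ A` an ideal generated by a regular sequence
`(s₁, …, s_k)` in `A`.  Let `B` be a commutative `A`-algebra such that the images of
`s₁, …, s_k` form a regular sequence in `B`.  Then `Tor_i^A (A⧸I, B) = 0` for all `i ≥ 1`.

Here a sequence is regular when each `s_j` is a nonzerodivisor on `A/(s₁, …, s_{j-1})`,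
which is `RingTheory.Sequence.IsWeaklyRegular` in Mathlib.
-/

open CategoryTheory CategoryTheory.Limits MonoidalCategory

universe u

namespace TorVanishingAux

variable {A : Type u} [CommRing A] {B : Type u} [CommRing B] [Algebra A B]

noncomputable section

/-- projective objects of `ModuleCat` are flat. -/
lemma flat_of_projective (X : ModuleCat.{u} A) [Projective X] : Module.Flat A X := by
  have : Module.Projective A X := by
    rw [IsProjective.iff_projective]
    convert ‹Projective X›
  exact Module.Flat.of_projective

/-- homology map commutes with scalars. -/
lemma homologyMap_smul {ι : Type} {c : ComplexShape ι}
    {K L : HomologicalComplex (ModuleCat.{u} A) c} (φ : K ⟶ L) (s : A) (i : ι) :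
    HomologicalComplex.homologyMap (s • φ) i = s • HomologicalComplex.homologyMap φ i := by
  have : (HomologicalComplex.shortComplexFunctor (ModuleCat.{u} A) c i).map (s • φ) =
      s • (HomologicalComplex.shortComplexFunctor (ModuleCat.{u} A) c i).map φ := by
    ext <;> rfl
  unfold HomologicalComplex.homologyMap
  rw [this, ShortComplex.homologyMap_smul]
  rfl

lemma mono_smul_id_iff (M : ModuleCat.{u} A) (s : A) :
    Mono (s • 𝟙 M) ↔ IsSMulRegular M s := by
  rw [ModuleCat.mono_iff_injective]
  exact Iff.rfl

variable (P : ProjectiveResolution (ModuleCat.of A B))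

/-- The functor sending a module `X` to the complex `X ⊗ P` where `P` is the chosen
projective resolution of `B`. -/
def G : ModuleCat.{u} A ⥤ HomologicalComplex (ModuleCat.{u} A) (ComplexShape.down ℕ) where
  obj X := ((tensorLeft X).mapHomologicalComplex (ComplexShape.down ℕ)).obj P.complex
  map {X Y} h :=
    (NatTrans.mapHomologicalComplex ((tensoringLeft (ModuleCat.{u} A)).map h)
      (ComplexShape.down ℕ)).app P.complex
  map_id X := by
    ext n
    simp
  map_comp {X Y Z} h h' := by
    ext n
    simp [MonoidalCategory.comp_whiskerRight]

instance : (G P).PreservesZeroMorphisms where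
  map_zero X Y := by
    ext n
    simp [G]
    rfl

lemma G_map_smul_id (s : A) (X : ModuleCat.{u} A) :
    (G P).map (s • 𝟙 X) = s • 𝟙 ((G P).obj X) := by
  ext n
  simp [G, MonoidalLinear.smul_whiskerRight]
  rfl

/-- `H₀` of the tensored complex is the tensor product. -/
def H0Iso (X : ModuleCat.{u} A) :
    (HomologicalComplex.homologyFunctor (ModuleCat.{u} A) (ComplexShape.down ℕ) 0).obj
        ((G P).obj X) ≅ (tensorLeft X).obj (ModuleCat.of A B) :=
  (P.isoLeftDerivedObj (tensorLeft X) 0).symm ≪≫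
    ((tensorLeft X).leftDerivedZeroIsoSelf).app (ModuleCat.of A B)

/-- Tensoring a short exact sequence with the complex `P` of projectives gives a
degreewise short exact sequence of complexes. -/
lemma shortExact_Gmap {S₀ : ShortComplex (ModuleCat.{u} A)} (hS₀ : S₀.ShortExact) :
    (S₀.map (G P)).ShortExact := by
  apply HomologicalComplex.shortExact_of_degreewise_shortExact
  intro n
  have flat : Module.Flat A (P.complex.X n) := flat_of_projective _
  have hex : (S₀.map (tensorRight (P.complex.X n))).Exact :=
    Module.Flat.rTensor_shortComplex_exact _ _ hS₀.exact
  have hmono : Mono ((tensorRight (P.complex.X n)).map S₀.f) := by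
    rw [ModuleCat.mono_iff_injective]
    have := hS₀.mono_f
    rw [ModuleCat.mono_iff_injective] at this
    exact Module.Flat.rTensor_preserves_injective_linearMap (M := P.complex.X n) S₀.f.hom this
  have hepi : Epi ((tensorRight (P.complex.X n)).map S₀.g) := by
    rw [ModuleCat.epi_iff_surjective]
    have := hS₀.epi_g
    rw [ModuleCat.epi_iff_surjective] at this
    exact LinearMap.rTensor_surjective _ this
  exact { exact := hex, mono_f := hmono, epi_g := hepi }


set_option maxHeartbeats 1000000 in
/-- The key induction: if `l` is weakly regular on `A` and on `B` (as an `A`-module),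
then the higher homology of `(A ⧸ (l)) ⊗ P` vanishes. -/
lemma core (P : ProjectiveResolution (ModuleCat.of A B)) (l : List A)
    (hAl : RingTheory.Sequence.IsWeaklyRegular A l)
    (hBl : RingTheory.Sequence.IsWeaklyRegular B l) (n : ℕ) :
    IsZero (((G P).obj (ModuleCat.of A (A ⧸ Ideal.ofList l))).homology (n + 1)) := by
  induction l using List.reverseRecOn generalizing n with
  | nil =>
    have eL : (A ⧸ Ideal.ofList ([] : List A)) ≃ₗ[A] A :=
      Submodule.quotEquivOfEqBot _ (by simp)
    let e : ModuleCat.of A (A ⧸ Ideal.ofList ([] : List A)) ≅ 𝟙_ (ModuleCat.{u} A) :=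
      eL.toModuleIso
    let α : tensorLeft (ModuleCat.of A (A ⧸ Ideal.ofList ([] : List A))) ≅ 𝟭 (ModuleCat.{u} A) :=
      (tensoringLeft (ModuleCat.{u} A)).mapIso e ≪≫ leftUnitorNatIso (ModuleCat.{u} A)
    let β : (G P).obj (ModuleCat.of A (A ⧸ Ideal.ofList ([] : List A))) ≅ P.complex :=
      (NatIso.mapHomologicalComplex α (ComplexShape.down ℕ)).app P.complex ≪≫
        (Functor.mapHomologicalComplexIdIso (ModuleCat.{u} A) (ComplexShape.down ℕ)).app
          P.complex
    refine IsZero.of_iso ?_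
      ((HomologicalComplex.homologyFunctor (ModuleCat.{u} A) (ComplexShape.down ℕ)
        (n + 1)).mapIso β)
    exact (HomologicalComplex.exactAt_iff_isZero_homology _ _).mp (P.complex_exactAt_succ n)
  | append_singleton l' s ih =>
    rw [RingTheory.Sequence.isWeaklyRegular_append_iff] at hAl hBl
    obtain ⟨hA1, hA2⟩ := hAl
    obtain ⟨hB1, hB2⟩ := hBl
    rw [RingTheory.Sequence.isWeaklyRegular_singleton_iff] at hA2 hB2
    have hJtop : (Ideal.ofList l' • ⊤ : Submodule A A) = Ideal.ofList l' := by
      rw [smul_eq_mul, Ideal.mul_top]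
    have hA2' : IsSMulRegular (A ⧸ Ideal.ofList l') s :=
      ((Submodule.quotEquivOfEq _ _ hJtop).isSMulRegular_congr s).mp hA2
    set X : ModuleCat.{u} A := ModuleCat.of A (A ⧸ Ideal.ofList l') with hX
    set X' : ModuleCat.{u} A := ModuleCat.of A (A ⧸ Ideal.ofList (l' ++ [s])) with hX'
    have hle : Ideal.ofList l' ≤ Ideal.ofList (l' ++ [s]) := by
      rw [Ideal.ofList_append]
      exact le_sup_left
    let π : X ⟶ X' := ModuleCat.ofHom
      (Submodule.mapQ (Ideal.ofList l') (Ideal.ofList (l' ++ [s])) LinearMap.id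
        (fun x hx => hle hx))
    have hπ : ∀ a : A, π (Submodule.Quotient.mk a) = Submodule.Quotient.mk a := fun a => rfl
    have hzero : (s • 𝟙 X) ≫ π = 0 := by
      apply ModuleCat.hom_ext
      apply LinearMap.ext
      intro x
      obtain ⟨a, rfl⟩ := Submodule.Quotient.mk_surjective _ x
      show π (s • (Submodule.Quotient.mk a : A ⧸ Ideal.ofList l')) = 0
      rw [← Submodule.Quotient.mk_smul, hπ]
      have hmem : s • a ∈ Ideal.ofList (l' ++ [s]) := by
        rw [Ideal.ofList_append, Ideal.ofList_singleton, smul_eq_mul, mul_comm]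
        exact Submodule.mem_sup_right
          (Ideal.mul_mem_left _ _ (Ideal.subset_span (Set.mem_singleton s)))
      exact (Submodule.Quotient.mk_eq_zero _).mpr hmem
    let S₀ : ShortComplex (ModuleCat.{u} A) := ShortComplex.mk (s • 𝟙 X) π hzero
    have hS₀ : S₀.ShortExact := by
      refine { exact := ?_, mono_f := ?_, epi_g := ?_ }
      · rw [ShortComplex.moduleCat_exact_iff]
        intro x hx
        obtain ⟨a, rfl⟩ := Submodule.Quotient.mk_surjective _ x
        rw [show S₀.g (Submodule.Quotient.mk a) = (Submodule.Quotient.mk a : A ⧸ Ideal.ofList (l' ++ [s])) from rfl,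
          Submodule.Quotient.mk_eq_zero, Ideal.ofList_append, Ideal.ofList_singleton] at hx
        obtain ⟨j, hj, c, hc, rfl⟩ := Submodule.mem_sup.mp hx
        obtain ⟨t, rfl⟩ := Ideal.mem_span_singleton'.mp hc
        refine ⟨Submodule.Quotient.mk t, ?_⟩
        show s • (Submodule.Quotient.mk t : A ⧸ Ideal.ofList l') = _
        rw [← Submodule.Quotient.mk_smul]
        rw [show s • t = t * s from (mul_comm t s).symm]
        symm
        rw [Submodule.Quotient.eq]
        simpa using hj
      · exact (mono_smul_id_iff X s).mpr hA2'
      · rw [ModuleCat.epi_iff_surjective]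
        intro x
        obtain ⟨a, rfl⟩ := Submodule.Quotient.mk_surjective _ x
        exact ⟨Submodule.Quotient.mk a, rfl⟩
    have hSc := shortExact_Gmap P hS₀
    have hzero1 : ∀ m : ℕ, IsZero (((G P).obj X).homology (m + 1)) := fun m => ih hA1 hB1 m
    have hf : (S₀.map (G P)).f = s • 𝟙 ((G P).obj X) := G_map_smul_id P s X
    match n with
    | 0 =>
      have hij : (ComplexShape.down ℕ).Rel 1 0 := by simp
      have e3 := hSc.homology_exact₃ 1 0 hij
      have e1 := hSc.homology_exact₁ 1 0 hij
      haveI hmonoδ : Mono (hSc.δ 1 0 hij) :=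
        e3.mono_g ((hzero1 0).eq_of_src _ _)
      have hm0 : Mono (HomologicalComplex.homologyMap (S₀.map (G P)).f 0) := by
        rw [hf]
        erw [homologyMap_smul,
          show HomologicalComplex.homologyMap (𝟙 ((G P).obj X)) 0 = 𝟙 _ from
            HomologicalComplex.homologyMap_id _ _]
        refine (mono_smul_id_iff _ s).mpr ?_
        have hreg : IsSMulRegular (B ⧸ (Ideal.ofList l' • ⊤ : Submodule A B)) s := hB2
        have e2 : ((G P).obj X).homology 0 ≃ₗ[A] (B ⧸ (Ideal.ofList l' • ⊤ : Submodule A B)) :=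
          (H0Iso P X).toLinearEquiv ≪≫ₗ TensorProduct.quotTensorEquivQuotSMul B (Ideal.ofList l')
        exact (e2.isSMulRegular_congr s).mpr hreg
      have hδ : hSc.δ 1 0 hij = 0 :=
        zero_of_comp_mono (HomologicalComplex.homologyMap (S₀.map (G P)).f 0)
          (hSc.δ_comp 1 0 hij)
      rw [IsZero.iff_id_eq_zero]
      change 𝟙 ((S₀.map (G P)).X₃.homology 1) = 0
      rw [← cancel_mono (hSc.δ 1 0 hij)]
      simp [hδ]
    | (m+1) =>
      have e3 := hSc.homology_exact₃ (m+2) (m+1) (by simp)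
      exact e3.isZero_X₂ ((hzero1 (m+1)).eq_of_src _ _) ((hzero1 m).eq_of_tgt _ _)

end

end TorVanishingAux

theorem tor_vanishing_of_regular_sequence {A : Type u} [CommRing A]
    {B : Type u} [CommRing B] [Algebra A B]
    (rs : List A)
    (hA : RingTheory.Sequence.IsWeaklyRegular A rs)
    (hB : RingTheory.Sequence.IsWeaklyRegular B (rs.map (algebraMap A B)))
    (I : Ideal A) (hI : I = Ideal.ofList rs)
    (i : ℕ) (hi : 1 ≤ i) :
    IsZero (((Tor (ModuleCat.{u} A) i).obj (ModuleCat.of A (A ⧸ I))).obj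
      (ModuleCat.of A B)) := by
  subst hI
  obtain ⟨n, rfl⟩ : ∃ n, i = n + 1 := ⟨i - 1, by omega⟩
  let P : ProjectiveResolution (ModuleCat.of A B) := HasProjectiveResolution.out.some
  have hB' : RingTheory.Sequence.IsWeaklyRegular B rs :=
    (RingTheory.Sequence.isWeaklyRegular_map_algebraMap_iff B B rs).mp hB
  refine IsZero.of_iso (TorVanishingAux.core P rs hA hB' n) ?_
  exact P.isoLeftDerivedObj
    ((tensoringLeft (ModuleCat.{u} A)).obj (ModuleCat.of A (A ⧸ Ideal.ofList rs))) (n + 1)
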